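/- If γ ~ Θ(a+1, δ) on the unit disk (a > 0, Re δ > -1/2), then γ^ι = -γ(1-γ̄)/(1-γ) has distribution Θ(ã+1, δ̃) with ã = a + 4 Re δ + 2 and δ̃ = -(1+δ); moreover ã > 0 and ã/2 + Re δ̃ > -1/2. -/

import Mathlib

open Complex MeasureTheory Real

/-- The involution `γ ↦ γ^ι = -γ(1-γ̄)/(1-γ)`. -/
noncomputable def diskIota (γ : ℂ) : ℂ := -γ * (1 - starRingEnd ℂ γ) / (1 - γ)

/-- The distribution `Θ(a+1,δ)` on the open unit disk, with density
`c_{a,δ}(1-|z|²)^{a/2-1}(1-z)^{δ̄}(1-z̄)^δ` with respect to Lebesgue measure. -/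
noncomputable def thetaDisk (a : ℝ) (δ : ℂ) : Measure ℂ :=
  (volume.restrict (Metric.ball (0 : ℂ) 1)).withDensity fun z =>
    ENNReal.ofReal
      (((Complex.Gamma (a / 2 + 1 + δ) * Complex.Gamma (a / 2 + 1 + starRingEnd ℂ δ) /
          ((π : ℂ) * Complex.Gamma (a / 2) * Complex.Gamma (a / 2 + 1 + δ + starRingEnd ℂ δ))) *
        ((1 - z) ^ (starRingEnd ℂ δ)) * ((1 - starRingEnd ℂ z) ^ δ)).re *
        (1 - ‖z‖ ^ 2) ^ (a / 2 - 1))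


noncomputable def iotaDeriv (z : ℂ) : ℂ →L[ℝ] ℂ :=
  (-(1 - (starRingEnd ℂ) z) / (1 - z) ^ 2) • (ContinuousLinearMap.id ℝ ℂ) +
    (z / (1 - z)) • (Complex.conjCLE : ℂ →L[ℝ] ℂ)

lemma hasFDerivAt_diskIota {z : ℂ} (hz : (1 : ℂ) - z ≠ 0) :
    HasFDerivAt diskIota (iotaDeriv z) z := by
  have hconj : HasFDerivAt (fun w : ℂ => (starRingEnd ℂ) w)
      (Complex.conjCLE : ℂ →L[ℝ] ℂ) z := by
    exact (Complex.conjCLE : ℂ →L[ℝ] ℂ).hasFDerivAt (x := z)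
  have h1 : HasFDerivAt (fun w : ℂ => -w) (-(ContinuousLinearMap.id ℝ ℂ)) z :=
    (hasFDerivAt_id z).neg
  have h2 : HasFDerivAt (fun w : ℂ => 1 - (starRingEnd ℂ) w)
      (-(Complex.conjCLE : ℂ →L[ℝ] ℂ)) z := hconj.const_sub 1
  have hnum := h1.mul h2
  have hden : HasFDerivAt (fun w : ℂ => 1 - w) (-(ContinuousLinearMap.id ℝ ℂ)) z :=
    (hasFDerivAt_id z).const_sub 1
  have hinv := (hasFDerivAt_inv' (𝕜 := ℝ) hz).comp z hden
  have H := hnum.mul hinv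
  have : diskIota = fun w : ℂ => -w * (1 - (starRingEnd ℂ) w) * (1 - w)⁻¹ := by
    funext w; simp [diskIota, div_eq_mul_inv]
  rw [this]
  have H2 : HasFDerivAt (fun w : ℂ => -w * (1 - (starRingEnd ℂ) w) * (1 - w)⁻¹) _ z := H
  convert H2 using 1
  ext h
  simp [iotaDeriv, Complex.conjCLE_apply, smul_smul, ContinuousLinearMap.mulLeftRight_apply]
  field_simp
  ring

lemma det_aux (α β : ℂ) :
    (α • (ContinuousLinearMap.id ℝ ℂ) + β • (Complex.conjCLE : ℂ →L[ℝ] ℂ)).det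
      = Complex.normSq α - Complex.normSq β := by
  have : (α • (ContinuousLinearMap.id ℝ ℂ) + β • (Complex.conjCLE : ℂ →L[ℝ] ℂ)).det
      = LinearMap.det ((α • (ContinuousLinearMap.id ℝ ℂ) +
        β • (Complex.conjCLE : ℂ →L[ℝ] ℂ)).toLinearMap) := rfl
  rw [this, ← LinearMap.det_toMatrix Complex.basisOneI, Matrix.det_fin_two]
  simp [LinearMap.toMatrix_apply, Complex.coe_basisOneI_repr, Complex.coe_basisOneI,
    Complex.conjCLE_apply, Complex.normSq_apply]
  ring

lemma hR (z : ℂ) : ((1 - ‖z‖ ^ 2 : ℝ) : ℂ) = 1 - z * starRingEnd ℂ z := by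
  rw [Complex.mul_conj, Complex.normSq_eq_norm_sq]; norm_cast

section facts
variable {z : ℂ} (hz : ‖z‖ < 1)
include hz

lemma absSq_lt_one : ‖z‖ ^ 2 < 1 := by
  nlinarith [norm_nonneg z]

lemma one_sub_ne_zero : (1 : ℂ) - z ≠ 0 := by
  refine sub_ne_zero.mpr fun h => ?_
  rw [← h] at hz; simp at hz

lemma one_sub_conj_ne_zero : (1 : ℂ) - starRingEnd ℂ z ≠ 0 := by
  refine sub_ne_zero.mpr fun h => ?_
  apply absurd hz
  have : ‖starRingEnd ℂ z‖ = 1 := by rw [← h]; simp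
  rw [Complex.norm_conj] at this; simp [this]

lemma R_ne_zero : ((1 - ‖z‖ ^ 2 : ℝ) : ℂ) ≠ 0 := by
  exact Complex.ofReal_ne_zero.mpr (ne_of_gt (sub_pos.mpr (absSq_lt_one hz)))

lemma one_sub_diskIota : 1 - diskIota z = ((1 - ‖z‖ ^ 2 : ℝ) : ℂ) / (1 - z) := by
  rw [diskIota, eq_div_iff (one_sub_ne_zero hz), hR, sub_mul, one_mul,
    div_mul_cancel₀ _ (one_sub_ne_zero hz)]
  ring

lemma one_sub_conj_diskIota :
    1 - starRingEnd ℂ (diskIota z) =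
      ((1 - ‖z‖ ^ 2 : ℝ) : ℂ) / (1 - starRingEnd ℂ z) := by
  have := congrArg (starRingEnd ℂ) (one_sub_diskIota hz)
  simpa [map_sub, map_div₀, Complex.conj_ofReal] using this

lemma abs_diskIota : ‖diskIota z‖ = ‖z‖ := by
  have : (1 : ℂ) - starRingEnd ℂ z = starRingEnd ℂ (1 - z) := by rw [map_sub, map_one]
  rw [diskIota, norm_div, norm_mul, this, Complex.norm_conj, norm_neg,
    mul_div_assoc, div_self (by simpa using norm_ne_zero_iff.mpr (one_sub_ne_zero hz)), mul_one]

lemma diskIota_diskIota : diskIota (diskIota z) = z := by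
  have hr := R_ne_zero hz
  have h1 := one_sub_diskIota hz
  have h2 := one_sub_conj_diskIota hz
  have hu := one_sub_ne_zero hz
  have hv := one_sub_conj_ne_zero hz
  have hrr : (1 : ℂ) - z * starRingEnd ℂ z ≠ 0 := by rwa [hR] at hr
  rw [hR] at h1 h2
  have hneg : -(diskIota z) = z * (1 - starRingEnd ℂ z) / (1 - z) := by
    rw [diskIota]; ring
  rw [diskIota, hneg, h1, h2]
  field_simp

lemma det_iotaDeriv : (iotaDeriv z).det
    = (1 - ‖z‖ ^ 2) / Complex.normSq (1 - z) := by
  have hu := one_sub_ne_zero hz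
  have hc : (1 : ℂ) - starRingEnd ℂ z = starRingEnd ℂ (1 - z) := by rw [map_sub, map_one]
  rw [iotaDeriv, det_aux, Complex.normSq_div, Complex.normSq_div]
  rw [show Complex.normSq (-(1 - starRingEnd ℂ z)) = Complex.normSq (1 - z) by
    rw [Complex.normSq_neg, hc, Complex.normSq_conj]]
  rw [show Complex.normSq ((1 - z) ^ 2) = Complex.normSq (1 - z) ^ 2 by
    rw [map_pow]]
  have hN : Complex.normSq (1 - z) ≠ 0 := by
    simpa using Complex.normSq_pos.mpr hu |>.ne'
  field_simp
  rw [Complex.sq_norm z]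
end facts

lemma ofReal_mul_cpow {r : ℝ} (hr : 0 < r) {x : ℂ} (hx : x ≠ 0) (s : ℂ) :
    ((r : ℂ) * x) ^ s = (r : ℂ) ^ s * x ^ s := by
  rcases eq_or_ne s 0 with rfl | hs
  · simp
  have hr' : (r : ℂ) ≠ 0 := Complex.ofReal_ne_zero.mpr hr.ne'
  rw [Complex.cpow_def_of_ne_zero (mul_ne_zero hr' hx), Complex.cpow_def_of_ne_zero hr',
    Complex.cpow_def_of_ne_zero hx, Complex.log_ofReal_mul hr hx, add_mul, Complex.exp_add,
    Complex.ofReal_log hr.le]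

lemma cpow_ofReal_div {r : ℝ} (hr : 0 < r) {x : ℂ} (hx : x ≠ 0) (hxa : x.arg ≠ π) (s : ℂ) :
    ((r : ℂ) / x) ^ s = (r : ℂ) ^ s * (x ^ s)⁻¹ := by
  rw [div_eq_mul_inv, ofReal_mul_cpow hr (inv_ne_zero hx), Complex.inv_cpow _ _ hxa]

lemma arg_ne_pi_of_re_pos {x : ℂ} (hx : 0 < x.re) : x.arg ≠ π := fun h => by
  rw [Complex.arg_eq_pi_iff] at h; linarith [h.1]

noncomputable def thetaC (a : ℝ) (δ : ℂ) : ℂ :=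
  Complex.Gamma (a / 2 + 1 + δ) * Complex.Gamma (a / 2 + 1 + starRingEnd ℂ δ) /
    ((π : ℂ) * Complex.Gamma (a / 2) * Complex.Gamma (a / 2 + 1 + δ + starRingEnd ℂ δ))

lemma conj_eq (δ : ℂ) : starRingEnd ℂ δ = 2 * (δ.re : ℂ) - δ := by
  have := Complex.add_conj δ
  push_cast at this ⊢
  linear_combination this

lemma thetaC_eq (a : ℝ) (δ : ℂ) :
    thetaC (a + 4 * δ.re + 2) (-(1 + δ)) = thetaC a δ := by
  unfold thetaC
  have e1 : ((a + 4 * δ.re + 2 : ℝ) : ℂ) / 2 + 1 + -(1 + δ) = a / 2 + 1 + starRingEnd ℂ δ := by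
    rw [conj_eq]; push_cast; ring
  have e2 : ((a + 4 * δ.re + 2 : ℝ) : ℂ) / 2 + 1 + starRingEnd ℂ (-(1 + δ)) = a / 2 + 1 + δ := by
    rw [map_neg, map_add, map_one, conj_eq]; push_cast; ring
  have e3 : ((a + 4 * δ.re + 2 : ℝ) : ℂ) / 2 = a / 2 + 1 + δ + starRingEnd ℂ δ := by
    rw [conj_eq]; push_cast; ring
  have e4 : ((a + 4 * δ.re + 2 : ℝ) : ℂ) / 2 + 1 + -(1 + δ) + starRingEnd ℂ (-(1 + δ))
      = (a : ℂ) / 2 := by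
    rw [map_neg, map_add, map_one, conj_eq]; push_cast; ring
  rw [e4, e1, e2, e3]
  ring

noncomputable def thetaF (a : ℝ) (δ : ℂ) (z : ℂ) : ℝ :=
  (thetaC a δ * ((1 - z) ^ (starRingEnd ℂ δ)) * ((1 - starRingEnd ℂ z) ^ δ)).re *
    (1 - ‖z‖ ^ 2) ^ (a / 2 - 1)

lemma key_density (a : ℝ) (δ : ℂ) {z : ℂ} (hz : ‖z‖ < 1) :
    |(iotaDeriv z).det| * thetaF (a + 4 * δ.re + 2) (-(1 + δ)) (diskIota z) = thetaF a δ z := by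
  have hr : 0 < 1 - ‖z‖ ^ 2 := sub_pos.mpr (absSq_lt_one hz)
  have hu := one_sub_ne_zero hz
  have hv := one_sub_conj_ne_zero hz
  have hN : Complex.normSq (1 - z) ≠ 0 := (Complex.normSq_pos.mpr hu).ne'
  have hrepos : z.re < 1 := lt_of_le_of_lt (Complex.re_le_norm z) hz
  have hau : (1 - z).arg ≠ π := arg_ne_pi_of_re_pos (by simp [Complex.sub_re]; linarith)
  have hav : (1 - starRingEnd ℂ z).arg ≠ π :=
    arg_ne_pi_of_re_pos (by simp [Complex.sub_re, Complex.conj_re]; linarith)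
  have habs : |(iotaDeriv z).det| = (1 - ‖z‖ ^ 2) / Complex.normSq (1 - z) := by
    rw [det_iotaDeriv hz]
    exact abs_of_pos (div_pos hr (Complex.normSq_pos.mpr hu))
  have hcd : starRingEnd ℂ (-(1 + δ)) = -(1 + starRingEnd ℂ δ) := by
    rw [map_neg, map_add, map_one]
  have hX : (((1 - ‖z‖ ^ 2 : ℝ) : ℂ) / (1 - z)) ^ (-(1 + starRingEnd ℂ δ)) =
      ((1 - ‖z‖ ^ 2 : ℝ) : ℂ) ^ (-(1 + starRingEnd ℂ δ)) *
        ((1 - z) * (1 - z) ^ (starRingEnd ℂ δ)) := by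
    rw [cpow_ofReal_div hr hu hau]
    congr 1
    rw [Complex.cpow_neg, inv_inv, Complex.cpow_add _ _ hu, Complex.cpow_one]
  have hY : (((1 - ‖z‖ ^ 2 : ℝ) : ℂ) / (1 - starRingEnd ℂ z)) ^ (-(1 + δ)) =
      ((1 - ‖z‖ ^ 2 : ℝ) : ℂ) ^ (-(1 + δ)) *
        ((1 - starRingEnd ℂ z) * (1 - starRingEnd ℂ z) ^ δ) := by
    rw [cpow_ofReal_div hr hv hav]
    congr 1
    rw [Complex.cpow_neg, inv_inv, Complex.cpow_add _ _ hv, Complex.cpow_one]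
  have hrs : ((1 - ‖z‖ ^ 2 : ℝ) : ℂ) ^ (-(1 + starRingEnd ℂ δ)) *
      ((1 - ‖z‖ ^ 2 : ℝ) : ℂ) ^ (-(1 + δ)) =
      (((1 - ‖z‖ ^ 2) ^ (-2 - 2 * δ.re : ℝ) : ℝ) : ℂ) := by
    rw [← Complex.cpow_add _ _ (Complex.ofReal_ne_zero.mpr hr.ne'),
      Complex.ofReal_cpow hr.le]
    congr 1
    rw [conj_eq]; push_cast; ring
  have huv : (1 - z) * (1 - starRingEnd ℂ z) = ((Complex.normSq (1 - z) : ℝ) : ℂ) := by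
    rw [show (1 : ℂ) - starRingEnd ℂ z = starRingEnd ℂ (1 - z) by rw [map_sub, map_one],
      Complex.mul_conj]
  have hprod : thetaC a δ *
        (((1 - ‖z‖ ^ 2 : ℝ) : ℂ) ^ (-(1 + starRingEnd ℂ δ)) *
          ((1 - z) * (1 - z) ^ (starRingEnd ℂ δ))) *
        (((1 - ‖z‖ ^ 2 : ℝ) : ℂ) ^ (-(1 + δ)) *
          ((1 - starRingEnd ℂ z) * (1 - starRingEnd ℂ z) ^ δ)) =
      ((Complex.normSq (1 - z) * (1 - ‖z‖ ^ 2) ^ (-2 - 2 * δ.re : ℝ) : ℝ) : ℂ) *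
        (thetaC a δ * (1 - z) ^ (starRingEnd ℂ δ) * (1 - starRingEnd ℂ z) ^ δ) := by
    calc thetaC a δ *
        (((1 - ‖z‖ ^ 2 : ℝ) : ℂ) ^ (-(1 + starRingEnd ℂ δ)) *
          ((1 - z) * (1 - z) ^ (starRingEnd ℂ δ))) *
        (((1 - ‖z‖ ^ 2 : ℝ) : ℂ) ^ (-(1 + δ)) *
          ((1 - starRingEnd ℂ z) * (1 - starRingEnd ℂ z) ^ δ)) =
        (((1 - ‖z‖ ^ 2 : ℝ) : ℂ) ^ (-(1 + starRingEnd ℂ δ)) *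
          ((1 - ‖z‖ ^ 2 : ℝ) : ℂ) ^ (-(1 + δ))) *
        ((1 - z) * (1 - starRingEnd ℂ z)) *
        (thetaC a δ * (1 - z) ^ (starRingEnd ℂ δ) * (1 - starRingEnd ℂ z) ^ δ) := by ring
      _ = _ := by rw [hrs, huv]; push_cast; ring
  have hcomb : (1 - ‖z‖ ^ 2) ^ (-2 - 2 * δ.re : ℝ) *
      (1 - ‖z‖ ^ 2) ^ ((a + 4 * δ.re + 2) / 2 - 1) * (1 - ‖z‖ ^ 2) =
      (1 - ‖z‖ ^ 2) ^ (a / 2 - 1) := by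
    rw [← Real.rpow_add hr, ← Real.rpow_add_one hr.ne']
    congr 1; ring
  unfold thetaF
  rw [abs_diskIota hz, one_sub_diskIota hz, one_sub_conj_diskIota hz, thetaC_eq, hcd,
    hX, hY, hprod, Complex.re_ofReal_mul, habs]
  calc (1 - ‖z‖ ^ 2) / Complex.normSq (1 - z) *
      (Complex.normSq (1 - z) * (1 - ‖z‖ ^ 2) ^ (-2 - 2 * δ.re : ℝ) *
        (thetaC a δ * (1 - z) ^ (starRingEnd ℂ δ) * (1 - starRingEnd ℂ z) ^ δ).re *
        (1 - ‖z‖ ^ 2) ^ ((a + 4 * δ.re + 2) / 2 - 1)) =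
      (thetaC a δ * (1 - z) ^ (starRingEnd ℂ δ) * (1 - starRingEnd ℂ z) ^ δ).re *
        ((1 - ‖z‖ ^ 2) ^ (-2 - 2 * δ.re : ℝ) *
          (1 - ‖z‖ ^ 2) ^ ((a + 4 * δ.re + 2) / 2 - 1) * (1 - ‖z‖ ^ 2)) *
        (Complex.normSq (1 - z) / Complex.normSq (1 - z)) := by ring
    _ = _ := by rw [div_self hN, hcomb, mul_one]

lemma measurable_diskIota : Measurable diskIota := by
  have hconj : Measurable fun z : ℂ => starRingEnd ℂ z := Complex.continuous_conj.measurable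
  exact (measurable_id.neg.mul (measurable_const.sub hconj)).div
    (measurable_const.sub measurable_id)

lemma diskIota_image (s : Set ℂ) :
    diskIota '' (diskIota ⁻¹' s ∩ Metric.ball (0 : ℂ) 1) = s ∩ Metric.ball (0 : ℂ) 1 := by
  ext w
  simp only [Set.mem_image, Set.mem_inter_iff, Set.mem_preimage, mem_ball_zero_iff]
  constructor
  · rintro ⟨z, ⟨hzs, hzB⟩, rfl⟩
    exact ⟨hzs, by rwa [abs_diskIota hzB]⟩
  · rintro ⟨hws, hwB⟩
    refine ⟨diskIota w, ⟨?_, by rwa [abs_diskIota hwB]⟩, diskIota_diskIota hwB⟩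
    rwa [diskIota_diskIota hwB]

lemma thetaDisk_eq (a : ℝ) (δ : ℂ) :
    thetaDisk a δ = (volume.restrict (Metric.ball (0 : ℂ) 1)).withDensity
      fun z => ENNReal.ofReal (thetaF a δ z) := rfl

/-- if `γ ~ Θ(a+1,δ)` then `γ^ι ~ Θ(ã+1, δ̃)` with
`ã = a + 4 Re δ + 2` and `δ̃ = -(1+δ)`; moreover `ã > 0` and `ã/2 + Re δ̃ > -1/2`. -/
theorem thetaDisk_map_iota (a : ℝ) (δ : ℂ) (ha : 0 < a) (hδ : -(1 / 2) < δ.re) :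
    (thetaDisk a δ).map diskIota = thetaDisk (a + 4 * δ.re + 2) (-(1 + δ)) ∧
    0 < a + 4 * δ.re + 2 ∧
    -(1 / 2) < (a + 4 * δ.re + 2) / 2 + (-(1 + δ)).re := by
  refine ⟨?_, by linarith, by simp [Complex.add_re, Complex.one_re, Complex.neg_re]; linarith⟩
  ext s hs
  have hmeas := measurable_diskIota
  rw [thetaDisk_eq, thetaDisk_eq, Measure.map_apply hmeas hs,
    withDensity_apply _ (hmeas hs), withDensity_apply _ hs,
    Measure.restrict_restrict (hmeas hs), Measure.restrict_restrict hs]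
  have htm : MeasurableSet (diskIota ⁻¹' s ∩ Metric.ball (0 : ℂ) 1) :=
    (hmeas hs).inter measurableSet_ball
  have hball : ∀ x : ℂ, x ∈ Metric.ball (0 : ℂ) 1 → ‖x‖ < 1 := fun x hx => by
    rwa [mem_ball_zero_iff] at hx
  have hder : ∀ x ∈ diskIota ⁻¹' s ∩ Metric.ball (0 : ℂ) 1,
      HasFDerivWithinAt diskIota (iotaDeriv x) (diskIota ⁻¹' s ∩ Metric.ball (0 : ℂ) 1) x :=
    fun x hx => (hasFDerivAt_diskIota (one_sub_ne_zero (hball x hx.2))).hasFDerivWithinAt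
  have hinj : Set.InjOn diskIota (diskIota ⁻¹' s ∩ Metric.ball (0 : ℂ) 1) :=
    fun x hx y hy h => by
      rw [← diskIota_diskIota (hball x hx.2), h, diskIota_diskIota (hball y hy.2)]
  rw [← diskIota_image s,
    lintegral_image_eq_lintegral_abs_det_fderiv_mul volume htm hder hinj]
  refine setLIntegral_congr_fun htm (fun x hx => ?_)
  rw [← ENNReal.ofReal_mul (abs_nonneg _), key_density a δ (hball x hx.2)]
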